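/- Let S be an orthodox completely regular semigroup (orthogroup) and ρ a congruence on S. Then ρ_t, the least congruence with the same trace as ρ, equals (ρ ∩ F)*, the congruence generated by ρ ∩ F, where a F b iff ab⁻¹ ∈ E(S). -/

import Mathlib

/-- A completely regular semigroup: a semigroup with a unary inversion such that
every element lies in a subgroup; `a⁻¹` is the group inverse of `a` in its maximal
subgroup and `a * a⁻¹` is the identity of that subgroup. -/
class CompletelyRegularSemigroup (S : Type*) extends Semigroup S, Inv S where
  mul_inv_mul (a : S) : a * a⁻¹ * a = a
  inv_mul_inv (a : S) : a⁻¹ * a * a⁻¹ = a⁻¹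
  mul_inv_comm (a : S) : a * a⁻¹ = a⁻¹ * a

variable {S : Type*} [CompletelyRegularSemigroup S]

/-- Green's relation `H` on a completely regular semigroup: `a H b` iff
`a` and `b` lie in the same maximal subgroup, i.e. `a⁰ = b⁰`. -/
def hRel (a b : S) : Prop := a * a⁻¹ = b * b⁻¹

/-- The relation `Θ`: `a Θ b` iff `a⁰ * b = a * b⁰`. -/
def thetaRel (a b : S) : Prop := (a * a⁻¹) * b = a * (b * b⁻¹)

/-- The relation `F`: `a F b` iff `a * b⁻¹` is idempotent. -/
def fRel (a b : S) : Prop := IsIdempotentElem (a * b⁻¹)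

/-- The kernel of a congruence: the union of the congruence classes of idempotents. -/
def conKer (c : Con S) : Set S := {a | ∃ e : S, IsIdempotentElem e ∧ c a e}

open CompletelyRegularSemigroup

private lemma aux_mul_inv_self (a : S) : a * (a * a⁻¹) = a := by
  rw [mul_inv_comm, ← mul_assoc, mul_inv_mul]

private lemma aux_inv_self_mul (a : S) : (a * a⁻¹) * a = a := by
  rw [mul_inv_mul]

private lemma aux_zero_idem (a : S) : IsIdempotentElem (a * a⁻¹) := by
  show (a * a⁻¹) * (a * a⁻¹) = a * a⁻¹
  rw [← mul_assoc, mul_inv_mul]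

/-- An idempotent is its own inverse. -/
private lemma inv_of_idem {e : S} (he : IsIdempotentElem e) : e⁻¹ = e := by
  have he' : e * e = e := he
  -- first: e * e⁻¹ = e  (uniqueness-of-commuting-inverse argument)
  have key : e * e⁻¹ = e := by
    have h1 : (e * e⁻¹) * (e * e) = e := by
      rw [← mul_assoc, mul_assoc e e⁻¹ e, ← mul_assoc, aux_inv_self_mul e, he']
    have h2 : (e * e⁻¹) * (e * e) = e * e⁻¹ := by
      rw [he', mul_assoc, ← mul_inv_comm, ← mul_assoc, he']
    rw [← h2, h1]
  calc e⁻¹ = e⁻¹ * e * e⁻¹ := (inv_mul_inv e).symm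
    _ = e⁻¹ * (e * e⁻¹) := by rw [mul_assoc]
    _ = e⁻¹ * e := by rw [key]
    _ = e * e⁻¹ := (mul_inv_comm e).symm
    _ = e := key

/-- Congruences on a completely regular semigroup are compatible with inversion. -/
private lemma con_inv (c : Con S) {a b : S} (h : c a b) : c a⁻¹ b⁻¹ := by
  -- first show c (a * a⁻¹) (b * b⁻¹)
  have hef : c (a * a⁻¹) (b * b⁻¹) := by
    -- e c e*f
    have h1 : c (a * a⁻¹) ((a * a⁻¹) * (b * b⁻¹)) := by
      have s1 : c (a⁻¹ * a) (a⁻¹ * b) := c.mul (c.refl a⁻¹) h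
      have s2 : a⁻¹ * b = (a⁻¹ * b) * (b * b⁻¹) := by
        rw [mul_inv_comm b, mul_assoc, ← mul_assoc b b⁻¹ b, aux_inv_self_mul b]
      have s2' : c (a⁻¹ * b) ((a⁻¹ * b) * (b * b⁻¹)) := by
        rw [← s2]; exact c.refl _
      have s3 : c ((a⁻¹ * b) * (b * b⁻¹)) ((a⁻¹ * a) * (b * b⁻¹)) :=
        c.mul (c.mul (c.refl a⁻¹) (c.symm h)) (c.refl _)
      have h1' : c (a⁻¹ * a) ((a⁻¹ * a) * (b * b⁻¹)) :=
        c.trans s1 (c.trans s2' s3)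
      rw [mul_inv_comm a]
      exact h1'
    -- e*f c f
    have h2 : c ((a * a⁻¹) * (b * b⁻¹)) (b * b⁻¹) := by
      have t1 : c ((a * a⁻¹) * (b * b⁻¹)) ((a * a⁻¹) * (a * b⁻¹)) :=
        c.mul (c.refl _) (c.mul (c.symm h) (c.refl b⁻¹))
      have t2 : (a * a⁻¹) * (a * b⁻¹) = a * b⁻¹ := by
        rw [← mul_assoc, aux_inv_self_mul a]
      have t3 : c (a * b⁻¹) (b * b⁻¹) := c.mul h (c.refl b⁻¹)
      exact c.trans t1 (show c ((a * a⁻¹) * (a * b⁻¹)) (b * b⁻¹) by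
        rw [t2]; exact t3)
    exact c.trans h1 h2
  -- now a⁻¹ c b⁻¹
  have u1 : a⁻¹ = a⁻¹ * (a * a⁻¹) := by rw [← mul_assoc, inv_mul_inv]
  have u2 : c (a⁻¹ * (a * a⁻¹)) (a⁻¹ * (b * b⁻¹)) := c.mul (c.refl a⁻¹) hef
  have u3 : c (a⁻¹ * (b * b⁻¹)) (a⁻¹ * (a * b⁻¹)) :=
    c.mul (c.refl a⁻¹) (c.mul (c.symm h) (c.refl b⁻¹))
  have u4 : a⁻¹ * (a * b⁻¹) = (a * a⁻¹) * b⁻¹ := by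
    rw [← mul_assoc, ← mul_inv_comm]
  have u5 : c ((a * a⁻¹) * b⁻¹) ((b * b⁻¹) * b⁻¹) := c.mul hef (c.refl b⁻¹)
  have u6 : (b * b⁻¹) * b⁻¹ = b⁻¹ := by
    rw [mul_inv_comm, mul_assoc, ← mul_assoc, inv_mul_inv]
  rw [u1]
  exact c.trans u2 (c.trans u3 (show c (a⁻¹ * (a * b⁻¹)) b⁻¹ by
    rw [u4]; rw [u6] at u5; exact u5))

/-- On an orthogroup, `ρ_t` (the least congruence with the same trace as `ρ`)
equals the congruence generated by `ρ ∩ F`. -/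
theorem rho_t_eq_conGen (hortho : ∀ e f : S, IsIdempotentElem e → IsIdempotentElem f →
      IsIdempotentElem (e * f))
    (ρ ρt : Con S)
    (htr : ∀ e f : S, IsIdempotentElem e → IsIdempotentElem f → (ρt e f ↔ ρ e f))
    (htleast : ∀ θ : Con S,
      (∀ e f : S, IsIdempotentElem e → IsIdempotentElem f → (θ e f ↔ ρ e f)) → ρt ≤ θ) :
    ρt = conGen (fun a b => ρ a b ∧ fRel a b) := by
  set r : S → S → Prop := fun a b => ρ a b ∧ fRel a b with hr
  have hle : conGen r ≤ ρ := Con.conGen_le.2 fun x y hxy => hxy.1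
  apply le_antisymm
  · -- ρt ≤ conGen r, since conGen r has the same trace as ρ
    apply htleast
    intro e f he hf
    constructor
    · intro h; exact hle h
    · intro h
      exact ConGen.Rel.of e f ⟨h, by
        show IsIdempotentElem (e * f⁻¹)
        rw [inv_of_idem hf]
        exact hortho e f he hf⟩
  · -- conGen r ≤ ρt
    apply Con.conGen_le.2
    rintro a b ⟨hab, hF⟩
    have hinv : ρ a⁻¹ b⁻¹ := con_inv ρ hab
    have hef : ρ (b * b⁻¹) (a * a⁻¹) := ρ.mul (ρ.symm hab) (ρ.symm hinv)
    have hgf : ρ (a * b⁻¹) (b * b⁻¹) := ρ.mul hab (ρ.refl b⁻¹)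
    have t1 : ρt (b * b⁻¹) (a * a⁻¹) :=
      (htr _ _ (aux_zero_idem b) (aux_zero_idem a)).mpr hef
    have t2 : ρt (a * b⁻¹) (b * b⁻¹) :=
      (htr _ _ hF (aux_zero_idem b)).mpr hgf
    -- a = a * (a*a⁻¹) ρt a * (b*b⁻¹) = (a*b⁻¹)*b ρt (b*b⁻¹)*b = b
    have s1 : ρt (a * (b * b⁻¹)) (a * (a * a⁻¹)) := ρt.mul (ρt.refl a) t1
    have s2 : ρt ((a * b⁻¹) * b) ((b * b⁻¹) * b) := ρt.mul t2 (ρt.refl b)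
    have e1 : a * (a * a⁻¹) = a := aux_mul_inv_self a
    have e2 : a * (b * b⁻¹) = (a * b⁻¹) * b := by
      rw [mul_inv_comm b, ← mul_assoc, mul_assoc]
    have e3 : (b * b⁻¹) * b = b := aux_inv_self_mul b
    have s2' : ρt (a * (b * b⁻¹)) b := by
      rw [e2]; rw [e3] at s2; exact s2
    show ρt a b
    rw [← e1]
    exact ρt.trans (ρt.symm s1) s2'
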